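/- Let $V$ be a finite-dimensional vector space over a field $\mathbb{F}$, $(V_1,\dots,V_n)$ subspaces of $V$, and $\alpha \in \mathbb{R}$. If $\Phi_V(V, (V_1,\dots,V_n), \alpha) < 0$, then there exists a subspace $W \subsetneq V$ such that for every subspace $U$ of $V$ with $U \not\subseteq W$, we have $\Phi_V(U + W, (V_1,\dots,V_n), \alpha) - \Phi_V(W, (V_1,\dots,V_n), \alpha) < 0$. -/

import Mathlib

/-- The potential function Φ_V(U, (V₁,…,Vₙ), α). -/
noncomputable def Phi (F : Type*) [Field F] {V : Type*} [AddCommGroup V] [Module F V]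
    {n : ℕ} (U : Submodule F V) (Vs : Fin n → Submodule F V) (α : ℝ) : ℝ :=
  α * (Module.finrank F ↥U : ℝ) -
    (1 / n) * ∑ i, ((Module.finrank F ↥U : ℝ) - (Module.finrank F ↥(U ⊓ Vs i) : ℝ))

theorem stmt_5 {F V : Type*} [Field F]
    [AddCommGroup V] [Module F V] [FiniteDimensional F V]
    {n : ℕ} (hn : 0 < n) (Vs : Fin n → Submodule F V) (α : ℝ)
    (h : Phi F (⊤ : Submodule F V) Vs α < 0) :
    ∃ W : Submodule F V, W ≠ ⊤ ∧
      ∀ U : Submodule F V, ¬ U ≤ W → Phi F (U ⊔ W) Vs α - Phi F W Vs α < 0 := by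
  classical
  set f : Submodule F V → ℝ := fun U => Phi F U Vs α with hf
  set D := Module.finrank F V with hD
  set P : Submodule F V → ℝ ×ₗ ℕ := fun U => toLex (f U, Module.finrank F ↥U) with hP
  have hfin : (Set.range P).Finite := by
    have h1 : (Set.range f).Finite := by
      apply Set.Finite.subset (Set.Finite.image
        (fun p : ℕ × (Fin n → ℕ) => α * p.1 - (1/(n:ℝ)) * ∑ i, ((p.1:ℝ) - p.2 i))
        ((Set.finite_Iic D).prod (Set.Finite.pi fun _ => Set.finite_Iic D)))
      rintro x ⟨U, rfl⟩
      exact ⟨(Module.finrank F ↥U, fun i => Module.finrank F ↥(U ⊓ Vs i)),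
        ⟨Submodule.finrank_le U, fun i _ => Submodule.finrank_le _⟩, rfl⟩
    apply Set.Finite.subset (Set.Finite.image toLex (h1.prod (Set.finite_Iic D)))
    rintro x ⟨U, rfl⟩
    exact ⟨(f U, Module.finrank F ↥U), ⟨⟨U, rfl⟩, Submodule.finrank_le U⟩, rfl⟩
  obtain ⟨x, ⟨W, rfl⟩, hmax⟩ :=
    hfin.exists_maximalFor id _ ⟨P ⊥, Set.mem_range_self _⟩
  have hle : ∀ U, P U ≤ P W := by
    intro U
    rcases le_total (P U) (P W) with h' | h'
    · exact h'
    · exact (hmax (Set.mem_range_self U) h').ge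
  have hf_le : ∀ U, f U ≤ f W := by
    intro U
    have := hle U
    simp only [hP] at this
    rcases Prod.Lex.le_iff.mp this with h' | h'
    · exact h'.le
    · exact h'.1.le
  have hbot : f ⊥ = 0 := by
    have h0 : ∀ i, (⊥ : Submodule F V) ⊓ Vs i = ⊥ := fun i => bot_inf_eq _
    simp only [hf, Phi]
    rw [finrank_bot]
    push_cast
    rw [Finset.sum_congr rfl (fun i _ => by rw [h0 i, finrank_bot])]
    simp
  have hWne : W ≠ ⊤ := by
    intro hWt
    have := hf_le ⊥
    rw [hbot, hWt] at this
    simp only [hf] at this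
    linarith
  refine ⟨W, hWne, fun U hU => ?_⟩
  by_contra hcon
  push_neg at hcon
  have heq : f (U ⊔ W) = f W := le_antisymm (hf_le _) (by simp only [hf]; clear hU; linarith)
  have hlex := hle (U ⊔ W)
  simp only [hP] at hlex
  have hdim : Module.finrank F ↥(U ⊔ W) ≤ Module.finrank F ↥W := by
    rcases Prod.Lex.le_iff.mp hlex with h' | h'
    · exact absurd heq h'.ne
    · exact h'.2
  have hlt : W < U ⊔ W := lt_of_le_of_ne le_sup_right (fun hh => hU (by
    rw [hh]; exact le_sup_left))
  exact absurd (Submodule.finrank_lt_finrank_of_lt hlt) (not_lt.mpr hdim)
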